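/- In F(X), for any three elements E, F, G in the same finite distance component, [E,G] ⊆ [E,F] ∪ [F,G]. -/
import Mathlib


open Set

/-- An element of the generic ℝ-forest `F(X)` (simplified): a 1-Lipschitz function
from a compact subset of `ℝ≥0` containing `0` into a metric space `X`. -/
structure FPath (X : Type*) [MetricSpace X] where
  dom : Set ℝ
  compact' : IsCompact dom
  zero_mem : (0 : ℝ) ∈ dom
  subset_Ici : dom ⊆ Set.Ici 0
  toFun : ℝ → X
  lip : LipschitzOnWith 1 toFun dom

namespace FPath

variable {X : Type*} [MetricSpace X]

/-- The length `|K| = sup π(K)`. -/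
noncomputable def len (K : FPath X) : ℝ := sSup K.dom

/-- `K` and `K'` agree up to `r`: `r` is in both domains and the restrictions to `[0,r]` coincide. -/
def Agree (K K' : FPath X) (r : ℝ) : Prop :=
  r ∈ K.dom ∧ r ∈ K'.dom ∧ K.dom ∩ Set.Icc 0 r = K'.dom ∩ Set.Icc 0 r ∧
    Set.EqOn K.toFun K'.toFun (K.dom ∩ Set.Icc 0 r)

/-- The length `|K ⊓ K'|` of the longest common initial segment. -/
noncomputable def meetLen (K K' : FPath X) : ℝ := sSup {r | Agree K K' r}

/-- `K` and `K'` are in the same finite distance component. -/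
def FinDist (K K' : FPath X) : Prop := K.toFun 0 = K'.toFun 0

/-- The forest metric `d(K,K') = |K| + |K'| - 2|K ⊓ K'|` (meaningful for finite-distance pairs). -/
noncomputable def tdist (K K' : FPath X) : ℝ := K.len + K'.len - 2 * meetLen K K'

/-- `L ⊑ K`: `L` is an initial segment of `K`. -/
def InitSeg (L K : FPath X) : Prop :=
  L.dom = K.dom ∩ Set.Icc 0 L.len ∧ Set.EqOn L.toFun K.toFun L.dom

/-- `L` belongs to the interval `[K,K'] = {L : K⊓K' ⊑ L ⊑ K or K⊓K' ⊑ L ⊑ K'}`. -/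
def MemInterval (K K' L : FPath X) : Prop :=
  ∃ M : FPath X, M.len = meetLen K K' ∧ InitSeg M K ∧ InitSeg M K' ∧
    ((InitSeg M L ∧ InitSeg L K) ∨ (InitSeg M L ∧ InitSeg L K'))

/-- The endpoint value `K_X(|K|)`. -/
noncomputable def endpt (K : FPath X) : X := K.toFun K.len

/-- Distance from `A` to the interval `[K,K']`. -/
noncomputable def idist (A K K' : FPath X) : ℝ :=
  sInf {r | ∃ L : FPath X, MemInterval K K' L ∧ r = A.tdist L}

/-- The length of the longest common initial segment of a set of paths. -/
noncomputable def setMeetLen (S : Set (FPath X)) : ℝ :=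
  sSup {r | ∀ K ∈ S, ∀ K' ∈ S, Agree K K' r}

/-- The diameter of a set of paths. -/
noncomputable def setDiam (S : Set (FPath X)) : ℝ :=
  sSup {r | ∃ K ∈ S, ∃ K' ∈ S, r = K.tdist K'}

end FPath

namespace FPath

variable {X : Type*} [MetricSpace X]

lemma dom_nonempty (K : FPath X) : K.dom.Nonempty := ⟨0, K.zero_mem⟩

lemma dom_bddAbove (K : FPath X) : BddAbove K.dom := K.compact'.bddAbove

lemma le_len {K : FPath X} {r : ℝ} (h : r ∈ K.dom) : r ≤ K.len :=
  le_csSup K.dom_bddAbove h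

lemma dom_nonneg {K : FPath X} {r : ℝ} (h : r ∈ K.dom) : 0 ≤ r := K.subset_Ici h

lemma agree_symm {K K' : FPath X} {r : ℝ} (h : Agree K K' r) : Agree K' K r := by
  obtain ⟨h1, h2, h3, h4⟩ := h
  exact ⟨h2, h1, h3.symm, fun x hx => (h4 (h3 ▸ hx)).symm⟩

lemma agree_trans {K K' K'' : FPath X} {r : ℝ} (h : Agree K K' r) (h' : Agree K' K'' r) :
    Agree K K'' r := by
  obtain ⟨h1, h2, h3, h4⟩ := h
  obtain ⟨h1', h2', h3', h4'⟩ := h'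
  exact ⟨h1, h2', h3.trans h3', fun x hx => (h4 hx).trans (h4' (h3 ▸ hx))⟩

lemma agree_zero {K K' : FPath X} (h : K.FinDist K') : Agree K K' 0 := by
  have hK : K.dom ∩ Icc (0:ℝ) 0 = {0} := by
    rw [Icc_self]
    exact Set.inter_eq_right.mpr (singleton_subset_iff.mpr K.zero_mem)
  have hK' : K'.dom ∩ Icc (0:ℝ) 0 = {0} := by
    rw [Icc_self]
    exact Set.inter_eq_right.mpr (singleton_subset_iff.mpr K'.zero_mem)
  refine ⟨K.zero_mem, K'.zero_mem, hK.trans hK'.symm, ?_⟩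
  rw [hK]
  intro x hx
  rw [mem_singleton_iff] at hx
  subst hx
  exact h

lemma agree_bddAbove (K K' : FPath X) : BddAbove {r | Agree K K' r} :=
  K.dom_bddAbove.mono (fun r hr => hr.1)

lemma le_meetLen {K K' : FPath X} {r : ℝ} (h : Agree K K' r) : r ≤ meetLen K K' :=
  le_csSup (agree_bddAbove K K') h

lemma meetLen_nonneg {K K' : FPath X} (h : K.FinDist K') : 0 ≤ meetLen K K' :=
  le_meetLen (agree_zero h)

lemma meetLen_symm (K K' : FPath X) : meetLen K K' = meetLen K' K := by
  unfold meetLen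
  congr 1
  ext r
  exact ⟨agree_symm, agree_symm⟩

lemma agree_mono {K K' : FPath X} {r s : ℝ} (h : Agree K K' r) (hs : s ∈ K.dom)
    (hsr : s ≤ r) : Agree K K' s := by
  obtain ⟨h1, h2, h3, h4⟩ := h
  have hs0 : (0:ℝ) ≤ s := dom_nonneg hs
  have hIcc : Icc (0:ℝ) s ⊆ Icc 0 r := Icc_subset_Icc le_rfl hsr
  have hs' : s ∈ K'.dom := by
    have : s ∈ K.dom ∩ Icc 0 r := ⟨hs, hs0, hsr⟩
    rw [h3] at this
    exact this.1
  refine ⟨hs, hs', ?_, fun x hx => h4 ⟨hx.1, hIcc hx.2⟩⟩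
  have e1 : K.dom ∩ Icc 0 s = (K.dom ∩ Icc 0 r) ∩ Icc 0 s := by
    rw [inter_assoc, Icc_inter_Icc, max_self, min_eq_right hsr]
  have e2 : K'.dom ∩ Icc 0 s = (K'.dom ∩ Icc 0 r) ∩ Icc 0 s := by
    rw [inter_assoc, Icc_inter_Icc, max_self, min_eq_right hsr]
  rw [e1, e2, h3]

/-- The sup of the agreement set is itself an agreement point. -/
lemma agree_meetLen {K K' : FPath X} (h : K.FinDist K') : Agree K K' (meetLen K K') := by
  show Agree K K' (sSup {r | Agree K K' r})
  set S := {r | Agree K K' r} with hS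
  have hne : S.Nonempty := ⟨0, agree_zero h⟩
  have hbdd : BddAbove S := agree_bddAbove K K'
  obtain ⟨u, hmono, htend, hmem⟩ := exists_seq_tendsto_sSup hne hbdd
  set s := sSup S with hsdef
  have hus : ∀ n, u n ≤ s := fun n => le_csSup hbdd (hmem n)
  have hsK : s ∈ K.dom := K.compact'.isClosed.mem_of_tendsto htend
    (Filter.Eventually.of_forall fun n => (hmem n).1)
  have hsK' : s ∈ K'.dom := K'.compact'.isClosed.mem_of_tendsto htend
    (Filter.Eventually.of_forall fun n => (hmem n).2.1)
  have hs0 : (0:ℝ) ≤ s := dom_nonneg hsK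
  -- key: any t < s with t in a dom ∩ Icc 0 s lies below some u n
  have hlt : ∀ t : ℝ, t < s → ∃ n, t ≤ u n := by
    intro t ht
    have := htend.eventually_const_lt ht
    obtain ⟨n, hn⟩ := this.exists
    exact ⟨n, hn.le⟩
  have hsub : ∀ (A B : FPath X), (∀ n, Agree A B (u n)) → A.dom ∩ Icc 0 s ⊆ B.dom ∩ Icc 0 s := by
    intro A B hAB t ht
    rcases eq_or_lt_of_le ht.2.2 with heq | hlt'
    · have hsB : s ∈ B.dom := B.compact'.isClosed.mem_of_tendsto htend
        (Filter.Eventually.of_forall fun n => (hAB n).2.1)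
      exact ⟨heq ▸ hsB, ht.2⟩
    · obtain ⟨n, hn⟩ := hlt t hlt'
      have : t ∈ A.dom ∩ Icc 0 (u n) := ⟨ht.1, ht.2.1, hn⟩
      rw [(hAB n).2.2.1] at this
      exact ⟨this.1, ht.2⟩
  have hAgreeN : ∀ n, Agree K K' (u n) := hmem
  have hAgreeN' : ∀ n, Agree K' K (u n) := fun n => agree_symm (hmem n)
  have hdomeq : K.dom ∩ Icc 0 s = K'.dom ∩ Icc 0 s :=
    Subset.antisymm (hsub K K' hAgreeN) (hsub K' K hAgreeN')
  refine ⟨hsK, hsK', hdomeq, ?_⟩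
  intro t ht
  rcases eq_or_lt_of_le ht.2.2 with heq | hlt'
  · -- continuity argument at t = s
    rw [heq]
    by_cases hus' : ∃ n, u n = s
    · obtain ⟨n, hn⟩ := hus'
      have hn0 : (0:ℝ) ≤ u n := dom_nonneg (hmem n).1
      exact (hmem n).2.2.2 ⟨hn ▸ (hmem n).1, hn ▸ hn0, hn.ge⟩
    · have hd : ∀ n, dist (K.toFun s) (K'.toFun s) ≤ 2 * dist s (u n) := by
        intro n
        have hn0 : (0:ℝ) ≤ u n := dom_nonneg (hmem n).1
        have huK : u n ∈ K.dom ∩ Icc 0 (u n) := ⟨(hmem n).1, hn0, le_rfl⟩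
        have heqn : K.toFun (u n) = K'.toFun (u n) := (hmem n).2.2.2 huK
        have l1 : dist (K.toFun s) (K.toFun (u n)) ≤ 1 * dist s (u n) := by
          simpa using (K.lip.dist_le_mul s hsK (u n) (hmem n).1)
        have l2 : dist (K'.toFun (u n)) (K'.toFun s) ≤ 1 * dist (u n) s := by
          simpa using (K'.lip.dist_le_mul (u n) (hmem n).2.1 s hsK')
        calc dist (K.toFun s) (K'.toFun s)
            ≤ dist (K.toFun s) (K.toFun (u n)) + dist (K'.toFun (u n)) (K'.toFun s) := by
              rw [heqn]; exact dist_triangle _ _ _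
          _ ≤ 1 * dist s (u n) + 1 * dist (u n) s := add_le_add l1 l2
          _ = 2 * dist s (u n) := by rw [dist_comm (u n) s]; ring
      have htends : Filter.Tendsto (fun n => 2 * dist s (u n)) Filter.atTop (nhds 0) := by
        have h' : Filter.Tendsto (fun n => dist s (u n)) Filter.atTop (nhds (dist s s)) :=
          (Filter.Tendsto.dist tendsto_const_nhds htend)
        rw [dist_self] at h'
        simpa using h'.const_mul 2
      have hle : dist (K.toFun s) (K'.toFun s) ≤ 0 :=
        ge_of_tendsto htends (Filter.Eventually.of_forall hd)
      exact dist_le_zero.mp hle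
  · obtain ⟨n, hn⟩ := hlt t hlt'
    exact (hmem n).2.2.2 ⟨ht.1, ht.2.1, hn⟩

/-- The meet of two finite-distance paths. -/
noncomputable def meet (K K' : FPath X) (h : K.FinDist K') : FPath X where
  dom := K.dom ∩ Icc 0 (meetLen K K')
  compact' := K.compact'.inter_right isClosed_Icc
  zero_mem := ⟨K.zero_mem, le_rfl, meetLen_nonneg h⟩
  subset_Ici := fun x hx => K.subset_Ici hx.1
  toFun := K.toFun
  lip := K.lip.mono inter_subset_left

lemma meet_len {K K' : FPath X} (h : K.FinDist K') : (meet K K' h).len = meetLen K K' := by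
  have hag := agree_meetLen h
  have hmem : meetLen K K' ∈ K.dom ∩ Icc 0 (meetLen K K') :=
    ⟨hag.1, meetLen_nonneg h, le_rfl⟩
  refine le_antisymm ?_ (le_csSup (K.dom_bddAbove.mono inter_subset_left) hmem)
  exact csSup_le ⟨_, hmem⟩ (fun x hx => hx.2.2)

lemma meet_initSeg_left {K K' : FPath X} (h : K.FinDist K') : InitSeg (meet K K' h) K := by
  refine ⟨?_, fun x _ => rfl⟩
  show K.dom ∩ Icc 0 (meetLen K K') = K.dom ∩ Icc 0 (meet K K' h).len
  rw [meet_len h]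

lemma meet_initSeg_right {K K' : FPath X} (h : K.FinDist K') : InitSeg (meet K K' h) K' := by
  have hag := agree_meetLen h
  constructor
  · show K.dom ∩ Icc 0 (meetLen K K') = K'.dom ∩ Icc 0 (meet K K' h).len
    rw [meet_len h, hag.2.2.1]
  · exact hag.2.2.2

lemma initSeg_len_le {M L : FPath X} (h : InitSeg M L) : M.len ≤ L.len := by
  have : M.dom ⊆ L.dom := h.1.trans_subset inter_subset_left
  exact csSup_le_csSup L.dom_bddAbove M.dom_nonempty this

lemma initSeg_trans_of_le {M L E : FPath X} (hME : InitSeg M E) (hLE : InitSeg L E)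
    (hlen : M.len ≤ L.len) : InitSeg M L := by
  have hdom : M.dom = L.dom ∩ Icc 0 M.len := by
    rw [hME.1, hLE.1, inter_assoc, Icc_inter_Icc, max_self, min_eq_right hlen]
  refine ⟨hdom, fun x hx => ?_⟩
  have hxL : x ∈ L.dom := (hdom ▸ hx).1
  rw [hME.2 hx, hLE.2 hxL]

lemma initSeg_transfer {L E F : FPath X} {r : ℝ} (hLE : InitSeg L E) (hEF : Agree E F r)
    (hlen : L.len ≤ r) : InitSeg L F := by
  have hdom : L.dom = F.dom ∩ Icc 0 L.len := by
    rw [hLE.1]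
    have : E.dom ∩ Icc 0 L.len = (E.dom ∩ Icc 0 r) ∩ Icc 0 L.len := by
      rw [inter_assoc, Icc_inter_Icc, max_self, min_eq_right hlen]
    rw [this, hEF.2.2.1, inter_assoc, Icc_inter_Icc, max_self, min_eq_right hlen]
  refine ⟨hdom, fun x hx => ?_⟩
  have hxE : x ∈ E.dom ∩ Icc 0 r := by
    have := hLE.1 ▸ hx
    exact ⟨this.1, this.2.1, this.2.2.trans hlen⟩
  rw [hLE.2 hx, hEF.2.2.2 hxE]

/-- Ultrametric inequality for meet lengths. -/
lemma min_meetLen_le {E F G : FPath X} (hEF : E.FinDist F) (hFG : F.FinDist G) :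
    min (meetLen E F) (meetLen F G) ≤ meetLen E G := by
  have h1 := agree_meetLen hEF
  have h2 := agree_meetLen hFG
  set r := min (meetLen E F) (meetLen F G) with hr
  have hrF : r ∈ F.dom := by
    rcases min_cases (meetLen E F) (meetLen F G) with ⟨he, _⟩ | ⟨he, _⟩
    · rw [hr, he]; exact h1.2.1
    · rw [hr, he]; exact h2.1
  have hEFr : Agree E F r := agree_symm (agree_mono (agree_symm h1) hrF (min_le_left _ _))
  have hFGr : Agree F G r := agree_mono h2 hrF (min_le_right _ _)
  exact le_meetLen (agree_trans hEFr hFGr)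

lemma memInterval_symm {K K' L : FPath X} (h : MemInterval K K' L) : MemInterval K' K L := by
  obtain ⟨M, h1, h2, h3, h4⟩ := h
  exact ⟨M, by rw [h1, meetLen_symm], h3, h2, h4.symm⟩

lemma finDist_symm {K K' : FPath X} (h : K.FinDist K') : K'.FinDist K := h.symm

/-- Core lemma: the case `L ⊑ E`. -/
lemma core {E F G : FPath X} (hEF : E.FinDist F) (hFG : F.FinDist G) (hEG : E.FinDist G)
    {L M : FPath X} (hMlen : M.len = meetLen E G) (hME : InitSeg M E) (hMG : InitSeg M G)
    (hML : InitSeg M L) (hLE : InitSeg L E) :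
    MemInterval E F L ∨ MemInterval F G L := by
  have hagEF := agree_meetLen hEF
  by_cases hcmp : meetLen E F ≤ L.len
  · -- L ∈ [E,F]
    left
    refine ⟨meet E F hEF, meet_len hEF, meet_initSeg_left hEF, meet_initSeg_right hEF,
      Or.inl ⟨?_, hLE⟩⟩
    exact initSeg_trans_of_le (meet_initSeg_left hEF) hLE (by rw [meet_len hEF]; exact hcmp)
  · -- L ∈ [F,G], witness M
    push_neg at hcmp
    right
    have hMlenL : M.len ≤ L.len := initSeg_len_le hML
    have hEGle : meetLen E G ≤ L.len := hMlen ▸ hMlenL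
    have hEGlt : meetLen E G < meetLen E F := lt_of_le_of_lt hEGle hcmp
    -- meetLen F G = meetLen E G
    have h1 : meetLen E G ≤ meetLen F G := by
      have h := min_meetLen_le (finDist_symm hEF) hEG
      rwa [meetLen_symm F E, min_eq_right hEGlt.le] at h
    have h2 : meetLen F G ≤ meetLen E G := by
      by_contra hc
      push_neg at hc
      have h := min_meetLen_le hEF hFG
      have hlt : meetLen E G < min (meetLen E F) (meetLen F G) := lt_min hEGlt hc
      linarith
    have hFGEG : meetLen F G = meetLen E G := le_antisymm h2 h1
    refine ⟨M, by rw [hMlen, hFGEG], ?_, hMG, Or.inl ⟨hML, ?_⟩⟩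
    · exact initSeg_transfer hME hagEF (by rw [hMlen]; exact hEGlt.le)
    · exact initSeg_transfer hLE hagEF hcmp.le

end FPath

/-- `[E,G] ⊆ [E,F] ∪ [F,G]` for pairwise finite-distance `E, F, G`. -/
theorem fpath_interval_subset_union {X : Type*} [MetricSpace X] (E F G : FPath X)
    (hEF : E.FinDist F) (hFG : F.FinDist G) (hEG : E.FinDist G) :
    ∀ L : FPath X, FPath.MemInterval E G L →
      FPath.MemInterval E F L ∨ FPath.MemInterval F G L := by
  intro L hL
  obtain ⟨M, hMlen, hME, hMG, hcase⟩ := hL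
  rcases hcase with ⟨hML, hLE⟩ | ⟨hML, hLG⟩
  · exact FPath.core hEF hFG hEG hMlen hME hMG hML hLE
  · have hMlen' : M.len = FPath.meetLen G E := by rw [hMlen, FPath.meetLen_symm]
    have h := FPath.core (FPath.finDist_symm hFG) (FPath.finDist_symm hEF)
      (FPath.finDist_symm hEG) hMlen' hMG hME hML hLG
    rcases h with h | h
    · exact Or.inr (FPath.memInterval_symm h)
    · exact Or.inl (FPath.memInterval_symm h)
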